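/- If λ ≠ 0 is a singular value of a third order tensor A with singular vectors x, y, z, then λ² is an M-eigenvalue of the contracted biquadratic tensor T^{(3)} with M-eigenvectors x and y. -/
import Mathlib


noncomputable section

/-- `lam` is a singular value of the third order tensor `A` with singular vectors `x, y, z`. -/
def IsSingularValue {d1 d2 d3 : ℕ} (A : Fin d1 → Fin d2 → Fin d3 → ℝ)
    (lam : ℝ) (x : Fin d1 → ℝ) (y : Fin d2 → ℝ) (z : Fin d3 → ℝ) : Prop :=
  (∀ i, ∑ j, ∑ k, A i j k * y j * z k = lam * x i) ∧
  (∀ j, ∑ i, ∑ k, A i j k * x i * z k = lam * y j) ∧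
  (∀ k, ∑ i, ∑ j, A i j k * x i * y j = lam * z k) ∧
  (∑ i, x i ^ 2 = 1) ∧ (∑ j, y j ^ 2 = 1) ∧ (∑ k, z k ^ 2 = 1)

/-- A fourth order tensor `T` of size `d1 × d2 × d1 × d2` is biquadratic. -/
def Biquadratic {d1 d2 : ℕ} (T : Fin d1 → Fin d2 → Fin d1 → Fin d2 → ℝ) : Prop :=
  ∀ i j p q, T i j p q = T p j i q ∧ T i j p q = T p q i j

/-- `⟨T, x ⊗ y ⊗ x ⊗ y⟩`. -/
def bform {d1 d2 : ℕ} (T : Fin d1 → Fin d2 → Fin d1 → Fin d2 → ℝ)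
    (x : Fin d1 → ℝ) (y : Fin d2 → ℝ) : ℝ :=
  ∑ i, ∑ j, ∑ p, ∑ q, T i j p q * x i * y j * x p * y q

/-- `mu` is an M-eigenvalue of `T` with M-eigenvectors `x, y`. -/
def IsMEigen {d1 d2 : ℕ} (T : Fin d1 → Fin d2 → Fin d1 → Fin d2 → ℝ)
    (mu : ℝ) (x : Fin d1 → ℝ) (y : Fin d2 → ℝ) : Prop :=
  (∀ i, ∑ j, ∑ p, ∑ q, T i j p q * y j * x p * y q = mu * x i) ∧
  (∀ j, ∑ i, ∑ p, ∑ q, T i j p q * x i * x p * y q = mu * y j) ∧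
  (∑ i, x i ^ 2 = 1) ∧ (∑ j, y j ^ 2 = 1)

/-- Contraction of `A` with itself on the third index. -/
def T3 {d1 d2 d3 : ℕ} (A : Fin d1 → Fin d2 → Fin d3 → ℝ) :
    Fin d1 → Fin d2 → Fin d1 → Fin d2 → ℝ :=
  fun i j p q => ∑ k, A i j k * A p q k

theorem stmt8 {d1 d2 d3 : ℕ} (A : Fin d1 → Fin d2 → Fin d3 → ℝ)
    (lam : ℝ) (hlam : lam ≠ 0) (x : Fin d1 → ℝ) (y : Fin d2 → ℝ) (z : Fin d3 → ℝ)
    (h : IsSingularValue A lam x y z) :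
    IsMEigen (T3 A) (lam ^ 2) x y := by
  obtain ⟨h1, h2, h3, hx, hy, hz⟩ := h
  refine ⟨fun i => ?_, fun j => ?_, hx, hy⟩
  · calc ∑ j, ∑ p, ∑ q, T3 A i j p q * y j * x p * y q
        = ∑ j, ∑ p, ∑ q, ∑ k, A i j k * A p q k * y j * x p * y q := by
          refine Finset.sum_congr rfl fun j _ => Finset.sum_congr rfl fun p _ =>
            Finset.sum_congr rfl fun q _ => ?_
          simp [T3, Finset.sum_mul]
      _ = ∑ j, ∑ k, ∑ p, ∑ q, A i j k * A p q k * y j * x p * y q := by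
          refine Finset.sum_congr rfl fun j _ => ?_
          rw [show (∑ p, ∑ q, ∑ k, A i j k * A p q k * y j * x p * y q)
              = ∑ p, ∑ k, ∑ q, A i j k * A p q k * y j * x p * y q from
            Finset.sum_congr rfl fun p _ => Finset.sum_comm, Finset.sum_comm]
      _ = ∑ j, ∑ k, A i j k * y j * (∑ p, ∑ q, A p q k * x p * y q) := by
          refine Finset.sum_congr rfl fun j _ => Finset.sum_congr rfl fun k _ => ?_
          rw [Finset.mul_sum]
          refine Finset.sum_congr rfl fun p _ => ?_
          rw [Finset.mul_sum]
          exact Finset.sum_congr rfl fun q _ => by ring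
      _ = ∑ j, ∑ k, A i j k * y j * (lam * z k) := by
          refine Finset.sum_congr rfl fun j _ => Finset.sum_congr rfl fun k _ => ?_
          rw [h3 k]
      _ = lam * ∑ j, ∑ k, A i j k * y j * z k := by
          rw [Finset.mul_sum]
          refine Finset.sum_congr rfl fun j _ => ?_
          rw [Finset.mul_sum]
          exact Finset.sum_congr rfl fun k _ => by ring
      _ = lam ^ 2 * x i := by rw [h1 i]; ring
  · calc ∑ i, ∑ p, ∑ q, T3 A i j p q * x i * x p * y q
        = ∑ i, ∑ p, ∑ q, ∑ k, A i j k * A p q k * x i * x p * y q := by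
          refine Finset.sum_congr rfl fun i _ => Finset.sum_congr rfl fun p _ =>
            Finset.sum_congr rfl fun q _ => ?_
          simp [T3, Finset.sum_mul]
      _ = ∑ i, ∑ k, ∑ p, ∑ q, A i j k * A p q k * x i * x p * y q := by
          refine Finset.sum_congr rfl fun i _ => ?_
          rw [show (∑ p, ∑ q, ∑ k, A i j k * A p q k * x i * x p * y q)
              = ∑ p, ∑ k, ∑ q, A i j k * A p q k * x i * x p * y q from
            Finset.sum_congr rfl fun p _ => Finset.sum_comm, Finset.sum_comm]
      _ = ∑ i, ∑ k, A i j k * x i * (∑ p, ∑ q, A p q k * x p * y q) := by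
          refine Finset.sum_congr rfl fun i _ => Finset.sum_congr rfl fun k _ => ?_
          rw [Finset.mul_sum]
          refine Finset.sum_congr rfl fun p _ => ?_
          rw [Finset.mul_sum]
          exact Finset.sum_congr rfl fun q _ => by ring
      _ = ∑ i, ∑ k, A i j k * x i * (lam * z k) := by
          refine Finset.sum_congr rfl fun i _ => Finset.sum_congr rfl fun k _ => ?_
          rw [h3 k]
      _ = lam * ∑ i, ∑ k, A i j k * x i * z k := by
          rw [Finset.mul_sum]
          refine Finset.sum_congr rfl fun i _ => ?_
          rw [Finset.mul_sum]
          exact Finset.sum_congr rfl fun k _ => by ring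
      _ = lam ^ 2 * y j := by rw [h2 j]; ring
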